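/- Trilinear Kakeya via Chebyshev for transversal plates: let 𝕊1, 𝕊2, 𝕊3 be finite families of δ × 1 × 1 plates in [0,1]³ whose unit normal vectors n1, n2, n3 (to plates from the three respective families) always satisfy |n1 ∧ n2 ∧ n3| ≥ c > 0, so that |S1 ∩ S2 ∩ S3| ≲ δ³ for any triple. Then the number of pairwise disjoint δ-cubes each intersecting at least r plates from each family satisfies |Q_r| ≲_c |𝕊1||𝕊2||𝕊3| / r³. -/

import Mathlib

open MeasureTheory
open scoped Classical

/-- A `(δ,1,1)`-plate in `[0,1]³` with unit normal `n`: the part of the unit cube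
lying in a slab of thickness `δ` orthogonal to `n`, with offset `t`. -/
def plate (δ : ℝ) (n : Fin 3 → ℝ) (t : ℝ) : Set (Fin 3 → ℝ) :=
  {x | (∀ k, x k ∈ Set.Icc (0:ℝ) 1) ∧
    t ≤ dotProduct x n ∧ dotProduct x n ≤ t + δ}

/-- An axis-parallel `δ`-cube in `ℝ³` with corner `a`. -/
def cube3 (δ : ℝ) (a : Fin 3 → ℝ) : Set (Fin 3 → ℝ) :=
  {x | ∀ k, a k ≤ x k ∧ x k ≤ a k + δ}

open scoped ENNReal

def slab (w : ℝ) (n : Fin 3 → ℝ) (t : ℝ) : Set (Fin 3 → ℝ) :=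
  {x | t ≤ dotProduct x n ∧ dotProduct x n ≤ t + w}

open scoped ENNReal in
lemma slab_eq (w : ℝ) (n : Fin 3 → ℝ) (t : ℝ) :
    slab w n t = (fun x => dotProduct x n) ⁻¹' Set.Icc t (t + w) := rfl

lemma measurable_dot (n : Fin 3 → ℝ) :
    Measurable fun x : Fin 3 → ℝ => dotProduct x n := by
  unfold dotProduct
  exact Finset.measurable_sum _ fun k _ => (measurable_pi_apply k).mul_const _

lemma slab_meas (w : ℝ) (n : Fin 3 → ℝ) (t : ℝ) : MeasurableSet (slab w n t) := by
  rw [slab_eq]; exact (measurable_dot n) measurableSet_Icc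

lemma cube3_eq (δ : ℝ) (a : Fin 3 → ℝ) :
    cube3 δ a = Set.pi Set.univ fun k => Set.Icc (a k) (a k + δ) := by
  ext x
  constructor
  · intro h i _; exact Set.mem_Icc.mpr (h i)
  · intro h k; exact Set.mem_Icc.mp (h k (Set.mem_univ k))

lemma cube3_meas (δ : ℝ) (a : Fin 3 → ℝ) : MeasurableSet (cube3 δ a) := by
  rw [cube3_eq]; exact MeasurableSet.univ_pi fun k => measurableSet_Icc

lemma volume_cube3 (δ : ℝ) (hδ : 0 ≤ δ) (a : Fin 3 → ℝ) :
    volume (cube3 δ a) = ENNReal.ofReal (δ ^ 3) := by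
  rw [cube3_eq, volume_pi_pi]
  simp [Real.volume_Icc, ← ENNReal.ofReal_pow hδ, Finset.prod_const]

lemma slab3_vol (c w : ℝ) (hc : 0 < c) (hw : 0 ≤ w)
    (n₁ n₂ n₃ : Fin 3 → ℝ) (t₁ t₂ t₃ : ℝ)
    (hdet : c ≤ |Matrix.det (Matrix.of ![n₁, n₂, n₃])|) :
    volume (slab w n₁ t₁ ∩ slab w n₂ t₂ ∩ slab w n₃ t₃) ≤
      ENNReal.ofReal (c⁻¹ * w ^ 3) := by
  set M : Matrix (Fin 3) (Fin 3) ℝ := Matrix.of ![n₁, n₂, n₃] with hM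
  set f := Matrix.toLin' M with hf
  have hdet0 : M.det ≠ 0 := by
    intro h; rw [h] at hdet; simp at hdet; linarith
  have hfdet : LinearMap.det f ≠ 0 := by rwa [hf, LinearMap.det_toLin']
  set t : Fin 3 → ℝ := ![t₁, t₂, t₃] with ht
  set s : Set (Fin 3 → ℝ) := Set.pi Set.univ fun i => Set.Icc (t i) (t i + w) with hs
  have hsub : slab w n₁ t₁ ∩ slab w n₂ t₂ ∩ slab w n₃ t₃ ⊆ f ⁻¹' s := by
    rintro x ⟨⟨h1, h2⟩, h3⟩
    have hfx : ∀ i, f x i = dotProduct x (![n₁, n₂, n₃] i) := by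
      intro i
      rw [hf, Matrix.toLin'_apply]
      exact dotProduct_comm _ _
    intro i _
    rw [Set.mem_Icc, hfx]
    fin_cases i
    · exact h1
    · exact h2
    · exact h3
  have hvs : volume s = ENNReal.ofReal (w ^ 3) := by
    rw [hs, volume_pi_pi]
    simp [Real.volume_Icc, ← ENNReal.ofReal_pow hw, Finset.prod_const]
  calc volume (slab w n₁ t₁ ∩ slab w n₂ t₂ ∩ slab w n₃ t₃)
      ≤ volume (f ⁻¹' s) := measure_mono hsub
    _ = ENNReal.ofReal |(LinearMap.det f)⁻¹| * volume s :=
        Measure.addHaar_preimage_linearMap volume hfdet s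
    _ ≤ ENNReal.ofReal (c⁻¹ * w ^ 3) := by
        rw [hvs, ← ENNReal.ofReal_mul (abs_nonneg _)]
        apply ENNReal.ofReal_le_ofReal
        apply mul_le_mul_of_nonneg_right _ (pow_nonneg hw 3)
        rw [abs_inv]
        rw [hf, LinearMap.det_toLin']
        exact inv_anti₀ hc hdet

lemma plate_subset_slab (δ : ℝ) (n : Fin 3 → ℝ) (t : ℝ) :
    plate δ n t ⊆ slab δ n t := fun x hx => ⟨hx.2.1, hx.2.2⟩

lemma cube_subset_slab (δ : ℝ) (hδ : 0 < δ) (a n : Fin 3 → ℝ) (t : ℝ)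
    (hn : ∑ k, (n k) ^ 2 = 1) (h : (cube3 δ a ∩ plate δ n t).Nonempty) :
    cube3 δ a ⊆ slab (7 * δ) n (t - 3 * δ) := by
  obtain ⟨y, hy, hyp⟩ := h
  intro x hx
  have hnk : ∀ k, |n k| ≤ 1 := by
    intro k
    have h1 : (n k) ^ 2 ≤ 1 := by
      rw [← hn]
      exact Finset.single_le_sum (fun i _ => sq_nonneg (n i)) (Finset.mem_univ k)
    nlinarith [abs_nonneg (n k), sq_abs (n k)]
  have key : |dotProduct x n - dotProduct y n| ≤ 3 * δ := by
    have he : dotProduct x n - dotProduct y n = ∑ k, (x k - y k) * n k := by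
      simp [dotProduct, ← Finset.sum_sub_distrib, sub_mul]
    rw [he]
    calc |∑ k, (x k - y k) * n k| ≤ ∑ k, |(x k - y k) * n k| :=
          Finset.abs_sum_le_sum_abs _ _
      _ ≤ ∑ _k : Fin 3, δ := by
          apply Finset.sum_le_sum
          intro k _
          rw [abs_mul]
          have h1 : |x k - y k| ≤ δ := by
            rw [abs_le]
            constructor <;> linarith [(hx k).1, (hx k).2, (hy k).1, (hy k).2]
          calc |x k - y k| * |n k| ≤ δ * 1 := mul_le_mul h1 (hnk k) (abs_nonneg _) hδ.le
            _ = δ := mul_one δ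
      _ = 3 * δ := by simp
  obtain ⟨-, hy1, hy2⟩ := hyp
  have hk := abs_le.mp key
  constructor
  · linarith [hk.1]
  · linarith [hk.2]


/-- Trilinear Kakeya via Chebyshev for transversal plates: if the unit normals of the
three families always satisfy `|n₁ ∧ n₂ ∧ n₃| ≥ c > 0`, then any triple intersection
has volume `≲ δ³`, and the number of pairwise disjoint δ-cubes each intersecting at
least `r` plates from each family is `≲_c |𝕊₁||𝕊₂||𝕊₃|/r³`. -/
theorem stmt4 :
    ∀ c : ℝ, 0 < c → ∃ C : ℝ, 0 < C ∧ ∀ (δ : ℝ), 0 < δ →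
      ∀ (ι₁ ι₂ ι₃ κ : Type) (𝕊₁ : Finset ι₁) (𝕊₂ : Finset ι₂) (𝕊₃ : Finset ι₃)
        (n₁ : ι₁ → Fin 3 → ℝ) (t₁ : ι₁ → ℝ) (n₂ : ι₂ → Fin 3 → ℝ) (t₂ : ι₂ → ℝ)
        (n₃ : ι₃ → Fin 3 → ℝ) (t₃ : ι₃ → ℝ),
      (∀ i ∈ 𝕊₁, ∑ k, (n₁ i k) ^ 2 = 1) →
      (∀ i ∈ 𝕊₂, ∑ k, (n₂ i k) ^ 2 = 1) →
      (∀ i ∈ 𝕊₃, ∑ k, (n₃ i k) ^ 2 = 1) →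
      (∀ i ∈ 𝕊₁, ∀ j ∈ 𝕊₂, ∀ l ∈ 𝕊₃,
        c ≤ |Matrix.det (Matrix.of ![n₁ i, n₂ j, n₃ l])|) →
      (∀ i ∈ 𝕊₁, ∀ j ∈ 𝕊₂, ∀ l ∈ 𝕊₃,
        volume (plate δ (n₁ i) (t₁ i) ∩ plate δ (n₂ j) (t₂ j) ∩ plate δ (n₃ l) (t₃ l)) ≤
          ENNReal.ofReal (C * δ ^ 3)) ∧
      (∀ (Q : Finset κ) (a : κ → Fin 3 → ℝ) (r : ℕ), 0 < r →
        (∀ k ∈ Q, ∀ l ∈ Q, k ≠ l → Disjoint (cube3 δ (a k)) (cube3 δ (a l))) →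
        (∀ k ∈ Q,
          r ≤ (𝕊₁.filter fun i => (cube3 δ (a k) ∩ plate δ (n₁ i) (t₁ i)).Nonempty).card ∧
          r ≤ (𝕊₂.filter fun j => (cube3 δ (a k) ∩ plate δ (n₂ j) (t₂ j)).Nonempty).card ∧
          r ≤ (𝕊₃.filter fun j => (cube3 δ (a k) ∩ plate δ (n₃ j) (t₃ j)).Nonempty).card) →
        (Q.card : ℝ) ≤ C * 𝕊₁.card * 𝕊₂.card * 𝕊₃.card / (r : ℝ) ^ 3) := by
  intro c hc
  refine ⟨343 / c, by positivity, ?_⟩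
  intro δ hδ ι₁ ι₂ ι₃ κ 𝕊₁ 𝕊₂ 𝕊₃ n₁ t₁ n₂ t₂ n₃ t₃ hn₁ hn₂ hn₃ hdet
  constructor
  · intro i hi j hj l hl
    calc volume (plate δ (n₁ i) (t₁ i) ∩ plate δ (n₂ j) (t₂ j) ∩ plate δ (n₃ l) (t₃ l))
        ≤ volume (slab δ (n₁ i) (t₁ i) ∩ slab δ (n₂ j) (t₂ j) ∩ slab δ (n₃ l) (t₃ l)) :=
          measure_mono (Set.inter_subset_inter
            (Set.inter_subset_inter (plate_subset_slab _ _ _) (plate_subset_slab _ _ _))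
            (plate_subset_slab _ _ _))
      _ ≤ ENNReal.ofReal (c⁻¹ * δ ^ 3) :=
          slab3_vol c δ hc hδ.le _ _ _ _ _ _ (hdet i hi j hj l hl)
      _ ≤ ENNReal.ofReal (343 / c * δ ^ 3) := by
          apply ENNReal.ofReal_le_ofReal
          apply mul_le_mul_of_nonneg_right _ (pow_nonneg hδ.le 3)
          rw [div_eq_mul_inv]
          nlinarith [inv_pos.mpr hc]
  · intro Q a r hr hdisj hrich
    set T : ι₁ × ι₂ × ι₃ → Set (Fin 3 → ℝ) := fun p =>
      slab (7 * δ) (n₁ p.1) (t₁ p.1 - 3 * δ) ∩ slab (7 * δ) (n₂ p.2.1) (t₂ p.2.1 - 3 * δ) ∩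
        slab (7 * δ) (n₃ p.2.2) (t₃ p.2.2 - 3 * δ) with hT
    have hcube : ∀ k ∈ Q, (r : ℝ≥0∞) ^ 3 * ENNReal.ofReal (δ ^ 3) ≤
        ∑ p ∈ 𝕊₁ ×ˢ 𝕊₂ ×ˢ 𝕊₃, volume (cube3 δ (a k) ∩ T p) := by
      intro k hk
      obtain ⟨h1, h2, h3⟩ := hrich k hk
      set F₁ := 𝕊₁.filter fun i => (cube3 δ (a k) ∩ plate δ (n₁ i) (t₁ i)).Nonempty with hF₁
      set F₂ := 𝕊₂.filter fun j => (cube3 δ (a k) ∩ plate δ (n₂ j) (t₂ j)).Nonempty with hF₂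
      set F₃ := 𝕊₃.filter fun j => (cube3 δ (a k) ∩ plate δ (n₃ j) (t₃ j)).Nonempty with hF₃
      have hsubP : F₁ ×ˢ F₂ ×ˢ F₃ ⊆ 𝕊₁ ×ˢ 𝕊₂ ×ˢ 𝕊₃ :=
        Finset.product_subset_product (Finset.filter_subset _ _)
          (Finset.product_subset_product (Finset.filter_subset _ _) (Finset.filter_subset _ _))
      have hterm : ∀ p ∈ F₁ ×ˢ F₂ ×ˢ F₃,
          volume (cube3 δ (a k) ∩ T p) = ENNReal.ofReal (δ ^ 3) := by
        intro p hp
        rw [Finset.mem_product] at hp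
        obtain ⟨hp1, hp23⟩ := hp
        rw [Finset.mem_product] at hp23
        obtain ⟨hp2, hp3⟩ := hp23
        rw [Finset.mem_filter] at hp1 hp2 hp3
        have c1 := cube_subset_slab δ hδ (a k) (n₁ p.1) (t₁ p.1) (hn₁ _ hp1.1) hp1.2
        have c2 := cube_subset_slab δ hδ (a k) (n₂ p.2.1) (t₂ p.2.1) (hn₂ _ hp2.1) hp2.2
        have c3 := cube_subset_slab δ hδ (a k) (n₃ p.2.2) (t₃ p.2.2) (hn₃ _ hp3.1) hp3.2
        have heq : cube3 δ (a k) ∩ T p = cube3 δ (a k) :=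
          Set.inter_eq_left.mpr (Set.subset_inter (Set.subset_inter c1 c2) c3)
        rw [heq, volume_cube3 δ hδ.le]
      have hNat : r ^ 3 ≤ F₁.card * (F₂.card * F₃.card) := by
        calc r ^ 3 = r * (r * r) := by ring
          _ ≤ F₁.card * (F₂.card * F₃.card) :=
            Nat.mul_le_mul h1 (Nat.mul_le_mul h2 h3)
      calc (r : ℝ≥0∞) ^ 3 * ENNReal.ofReal (δ ^ 3)
          ≤ ((F₁.card * (F₂.card * F₃.card) : ℕ) : ℝ≥0∞) * ENNReal.ofReal (δ ^ 3) := by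
            apply mul_le_mul_left
            have : ((r ^ 3 : ℕ) : ℝ≥0∞) ≤ ((F₁.card * (F₂.card * F₃.card) : ℕ) : ℝ≥0∞) :=
              Nat.cast_le.mpr hNat
            simpa using this
        _ = ∑ _p ∈ F₁ ×ˢ F₂ ×ˢ F₃, ENNReal.ofReal (δ ^ 3) := by
            rw [Finset.sum_const, Finset.card_product, Finset.card_product, nsmul_eq_mul]
        _ = ∑ p ∈ F₁ ×ˢ F₂ ×ˢ F₃, volume (cube3 δ (a k) ∩ T p) :=
            (Finset.sum_congr rfl hterm).symm
        _ ≤ ∑ p ∈ 𝕊₁ ×ˢ 𝕊₂ ×ˢ 𝕊₃, volume (cube3 δ (a k) ∩ T p) :=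
            Finset.sum_le_sum_of_subset hsubP
    have hTvol : ∀ p ∈ 𝕊₁ ×ˢ 𝕊₂ ×ˢ 𝕊₃,
        ∑ k ∈ Q, volume (cube3 δ (a k) ∩ T p) ≤ ENNReal.ofReal (343 / c * δ ^ 3) := by
      intro p hp
      rw [Finset.mem_product] at hp
      obtain ⟨hp1, hp23⟩ := hp
      rw [Finset.mem_product] at hp23
      have hm : ∀ k ∈ Q, MeasurableSet (cube3 δ (a k) ∩ T p) := fun k _ =>
        (cube3_meas δ (a k)).inter (((slab_meas _ _ _).inter (slab_meas _ _ _)).inter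
          (slab_meas _ _ _))
      have hpw : (↑Q : Set κ).PairwiseDisjoint fun k => cube3 δ (a k) ∩ T p := by
        intro x hx y hy hxy
        exact (hdisj x hx y hy hxy).mono Set.inter_subset_left Set.inter_subset_left
      calc ∑ k ∈ Q, volume (cube3 δ (a k) ∩ T p)
          = volume (⋃ k ∈ Q, cube3 δ (a k) ∩ T p) :=
            (measure_biUnion_finset hpw hm).symm
        _ ≤ volume (T p) := measure_mono (Set.iUnion₂_subset fun k _ => Set.inter_subset_right)
        _ ≤ ENNReal.ofReal (c⁻¹ * (7 * δ) ^ 3) :=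
            slab3_vol c (7 * δ) hc (by positivity) _ _ _ _ _ _
              (hdet p.1 hp1 p.2.1 hp23.1 p.2.2 hp23.2)
        _ = ENNReal.ofReal (343 / c * δ ^ 3) := by
            congr 1; field_simp; ring
    have global : (Q.card : ℝ≥0∞) * ((r : ℝ≥0∞) ^ 3 * ENNReal.ofReal (δ ^ 3)) ≤
        ((𝕊₁.card * (𝕊₂.card * 𝕊₃.card) : ℕ) : ℝ≥0∞) * ENNReal.ofReal (343 / c * δ ^ 3) := by
      calc (Q.card : ℝ≥0∞) * ((r : ℝ≥0∞) ^ 3 * ENNReal.ofReal (δ ^ 3))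
          = ∑ _k ∈ Q, (r : ℝ≥0∞) ^ 3 * ENNReal.ofReal (δ ^ 3) := by
            rw [Finset.sum_const, nsmul_eq_mul]
        _ ≤ ∑ k ∈ Q, ∑ p ∈ 𝕊₁ ×ˢ 𝕊₂ ×ˢ 𝕊₃, volume (cube3 δ (a k) ∩ T p) :=
            Finset.sum_le_sum hcube
        _ = ∑ p ∈ 𝕊₁ ×ˢ 𝕊₂ ×ˢ 𝕊₃, ∑ k ∈ Q, volume (cube3 δ (a k) ∩ T p) :=
            Finset.sum_comm
        _ ≤ ∑ _p ∈ 𝕊₁ ×ˢ 𝕊₂ ×ˢ 𝕊₃, ENNReal.ofReal (343 / c * δ ^ 3) :=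
            Finset.sum_le_sum hTvol
        _ = ((𝕊₁.card * (𝕊₂.card * 𝕊₃.card) : ℕ) : ℝ≥0∞) * ENNReal.ofReal (343 / c * δ ^ 3) := by
            rw [Finset.sum_const, Finset.card_product, Finset.card_product, nsmul_eq_mul]
    have e1 : (Q.card : ℝ≥0∞) * ((r : ℝ≥0∞) ^ 3 * ENNReal.ofReal (δ ^ 3)) =
        ENNReal.ofReal ((Q.card : ℝ) * ((r : ℝ) ^ 3 * δ ^ 3)) := by
      rw [← ENNReal.ofReal_natCast Q.card, ← ENNReal.ofReal_natCast r,
        ← ENNReal.ofReal_pow (by positivity), ← ENNReal.ofReal_mul (by positivity),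
        ← ENNReal.ofReal_mul (by positivity)]
    have e2 : ((𝕊₁.card * (𝕊₂.card * 𝕊₃.card) : ℕ) : ℝ≥0∞) * ENNReal.ofReal (343 / c * δ ^ 3) =
        ENNReal.ofReal (((𝕊₁.card * (𝕊₂.card * 𝕊₃.card) : ℕ) : ℝ) * (343 / c * δ ^ 3)) := by
      rw [← ENNReal.ofReal_natCast (𝕊₁.card * (𝕊₂.card * 𝕊₃.card)),
        ← ENNReal.ofReal_mul (by positivity)]
    rw [e1, e2] at global
    have hreal : (Q.card : ℝ) * ((r : ℝ) ^ 3 * δ ^ 3) ≤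
        ((𝕊₁.card * (𝕊₂.card * 𝕊₃.card) : ℕ) : ℝ) * (343 / c * δ ^ 3) :=
      (ENNReal.ofReal_le_ofReal_iff (by positivity)).mp global
    push_cast at hreal
    have hrpos : (0 : ℝ) < (r : ℝ) ^ 3 := by positivity
    rw [le_div_iff₀ hrpos]
    have hd3 : (0 : ℝ) < δ ^ 3 := by positivity
    nlinarith [hreal, hd3]
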